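/- Let X be a Banach space with the Lebesgue property, and let Xₙ be ℓ₁ with the norm n·‖·‖_{ℓ₁}. Then every spreading model of the ℓ₁-sum (⊕ₙ Xₙ)_{ℓ₁} is equivalent to the unit vector basis of ℓ₁, but there is no single constant C such that every spreading model is C-equivalent to the unit vector basis of ℓ₁. -/

import Mathlib

open Finset MeasureTheory

structure TaggedPartition where
  n : ℕ
  p : ℕ → ℝ
  t : ℕ → ℝ
  n_pos : 0 < n
  p_zero : p 0 = 0
  p_last : p n = 1
  p_mono : ∀ i < n, p i < p (i + 1)
  t_mem : ∀ i < n, t i ∈ Set.Icc (p i) (p (i + 1))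

def TaggedPartition.MeshLt (P : TaggedPartition) (δ : ℝ) : Prop :=
  ∀ i < P.n, P.p (i + 1) - P.p i < δ

noncomputable def riemannSum {X : Type*} [NormedAddCommGroup X] [NormedSpace ℝ X]
    (f : ℝ → X) (P : TaggedPartition) : X :=
  ∑ i ∈ Finset.range P.n, (P.p (i + 1) - P.p i) • f (P.t i)

def HasRiemannIntegral {X : Type*} [NormedAddCommGroup X] [NormedSpace ℝ X]
    (f : ℝ → X) (x : X) : Prop :=
  ∀ ε > (0 : ℝ), ∃ δ > (0 : ℝ), ∀ P : TaggedPartition, P.MeshLt δ →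
    ‖x - riemannSum f P‖ < ε

def RiemannIntegrable {X : Type*} [NormedAddCommGroup X] [NormedSpace ℝ X]
    (f : ℝ → X) : Prop :=
  ∃ x, HasRiemannIntegral f x

def LebesgueProperty (X : Type*) [NormedAddCommGroup X] [NormedSpace ℝ X] : Prop :=
  ∀ f : ℝ → X, RiemannIntegrable f →
    ∀ᵐ t ∂(MeasureTheory.volume.restrict (Set.Icc (0 : ℝ) 1)),
      ContinuousWithinAt f (Set.Icc (0 : ℝ) 1) t

/-- A (normalized after adding `‖x i‖ = 1`) basic sequence, via the basis-constant inequality. -/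
def IsBasicSeq {X : Type*} [NormedAddCommGroup X] [NormedSpace ℝ X] (x : ℕ → X) : Prop :=
  ∃ K : ℝ, 1 ≤ K ∧ ∀ (a : ℕ → ℝ) (n m : ℕ), n ≤ m →
    ‖∑ i ∈ Finset.range n, a i • x i‖ ≤ K * ‖∑ i ∈ Finset.range m, a i • x i‖

/-- `v` (a normalized basis of `V`) is an asymptotic model generated by the array `x`
(row `j` is `x j`). -/
def GeneratesAsymptoticModel {X : Type*} [NormedAddCommGroup X] [NormedSpace ℝ X]
    (x : ℕ → ℕ → X) (V : Type*) [NormedAddCommGroup V] [NormedSpace ℝ V]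
    (v : ℕ → V) : Prop :=
  ∃ δ : ℕ → ℝ, (∀ n, 0 < δ n) ∧ Antitone δ ∧ Filter.Tendsto δ Filter.atTop (nhds 0) ∧
    ∀ (n : ℕ) (i : ℕ → ℕ) (a : ℕ → ℝ),
      (∀ j < n, n ≤ i j) → (∀ j j', j < j' → j' < n → i j < i j') → (∀ j < n, |a j| ≤ 1) →
      |‖∑ j ∈ Finset.range n, a j • x j (i j)‖ - ‖∑ j ∈ Finset.range n, a j • v j‖| < δ n

/-- `v` (a normalized basis of `V`) is a spreading model generated by the sequence `e`. -/
def GeneratesSpreadingModel {X : Type*} [NormedAddCommGroup X] [NormedSpace ℝ X]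
    (e : ℕ → X) (V : Type*) [NormedAddCommGroup V] [NormedSpace ℝ V]
    (v : ℕ → V) : Prop :=
  ∃ δ : ℕ → ℝ, (∀ n, 0 < δ n) ∧ Antitone δ ∧ Filter.Tendsto δ Filter.atTop (nhds 0) ∧
    ∀ (n : ℕ) (i : ℕ → ℕ) (a : ℕ → ℝ),
      (∀ j < n, n ≤ i j) → (∀ j j', j < j' → j' < n → i j < i j') → (∀ j < n, |a j| ≤ 1) →
      |‖∑ j ∈ Finset.range n, a j • e (i j)‖ - ‖∑ j ∈ Finset.range n, a j • v j‖| < δ n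

/-- A basic sequence is equivalent to the unit vector basis of `ℓ₁`. -/
def EquivL1Basis {V : Type*} [NormedAddCommGroup V] [NormedSpace ℝ V] (v : ℕ → V) : Prop :=
  ∃ C : ℝ, 0 < C ∧ ∀ (n : ℕ) (a : ℕ → ℝ),
    (1 / C) * ∑ i ∈ Finset.range n, |a i| ≤ ‖∑ i ∈ Finset.range n, a i • v i‖ ∧
    ‖∑ i ∈ Finset.range n, a i • v i‖ ≤ C * ∑ i ∈ Finset.range n, |a i|

section Aux
variable {E : ℕ → Type} [∀ n, NormedAddCommGroup (E n)] [∀ n, NormedSpace ℝ (E n)]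

noncomputable def uu (T : ∀ n : ℕ, lp (fun _ : ℕ => ℝ) 1 ≃ₗ[ℝ] E n) (x : lp E 1) :
    ℕ × ℕ → ℝ :=
  fun p => ((p.1 : ℝ) + 1) * ((T p.1).symm (x p.1) : ℕ → ℝ) p.2

variable (T : ∀ n : ℕ, lp (fun _ : ℕ => ℝ) 1 ≃ₗ[ℝ] E n)
variable (hT : ∀ (n : ℕ) (x : lp (fun _ : ℕ => ℝ) 1), ‖T n x‖ = ((n : ℝ) + 1) * ‖x‖)


lemma l1_hasSum_norm (F : Type*) [NormedAddCommGroup F] (G : ℕ → Type*)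
    [∀ n, NormedAddCommGroup (G n)] (f : lp G 1) :
    HasSum (fun i => ‖f i‖) ‖f‖ := by
  have := lp.hasSum_norm (p := 1) (by simp) f
  simpa using this

include hT in
lemma uu_inner_hasSum (x : lp E 1) (n : ℕ) :
    HasSum (fun k => |uu T x (n, k)|) ‖x n‖ := by
  set z := (T n).symm (x n) with hz
  have h1 : HasSum (fun k => ‖(z : ℕ → ℝ) k‖) ‖z‖ := l1_hasSum_norm ℝ _ z
  have h2 : HasSum (fun k => ((n:ℝ)+1) * ‖(z : ℕ → ℝ) k‖) (((n:ℝ)+1) * ‖z‖) := h1.mul_left _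
  have h3 : ((n:ℝ)+1) * ‖z‖ = ‖x n‖ := by
    rw [← hT n z, hz, (T n).apply_symm_apply]
  rw [h3] at h2
  convert h2 using 2 with k
  rw [uu, abs_mul, Real.norm_eq_abs]
  congr 1
  rw [abs_of_nonneg (by positivity)]

include hT in
lemma uu_hasSum (x : lp E 1) : HasSum (fun p => |uu T x p|) ‖x‖ := by
  have houter : HasSum (fun n => ‖x n‖) ‖x‖ := l1_hasSum_norm ℝ _ x
  have hinner := uu_inner_hasSum T hT x
  have hsummable : Summable (fun p : ℕ × ℕ => |uu T x p|) := by
    rw [summable_prod_of_nonneg (fun p => abs_nonneg _)]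
    refine ⟨fun n => (hinner n).summable, ?_⟩
    have : (fun n => ∑' k, |uu T x (n, k)|) = fun n => ‖x n‖ := by
      funext n; exact (hinner n).tsum_eq
    rw [this]
    exact houter.summable
  have := hsummable.hasSum
  have ht : ∑' p : ℕ × ℕ, |uu T x p| = ‖x‖ := by
    rw [Summable.tsum_prod' hsummable (fun n => (hinner n).summable)]
    calc ∑' (n) (k), |uu T x (n, k)| = ∑' n, ‖x n‖ := by
          congr 1; funext n; exact (hinner n).tsum_eq
      _ = ‖x‖ := houter.tsum_eq
  rwa [ht] at this


lemma uu_sub (x y : lp E 1) (p : ℕ × ℕ) : uu T (x - y) p = uu T x p - uu T y p := by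
  simp only [uu]
  have h1 : (x - y : lp E 1) p.1 = x p.1 - y p.1 := by
    rw [lp.coeFn_sub]; rfl
  rw [h1, map_sub]
  have h2 : ((T p.1).symm (x p.1) - (T p.1).symm (y p.1) : lp (fun _ : ℕ => ℝ) 1) p.2
      = ((T p.1).symm (x p.1) : ℕ → ℝ) p.2 - ((T p.1).symm (y p.1) : ℕ → ℝ) p.2 := by
    rw [lp.coeFn_sub]; rfl
  rw [h2]; ring

lemma uu_smul (c : ℝ) (x : lp E 1) (p : ℕ × ℕ) : uu T (c • x) p = c * uu T x p := by
  simp only [uu]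
  have h1 : (c • x : lp E 1) p.1 = c • x p.1 := by rw [lp.coeFn_smul]; rfl
  rw [h1, _root_.map_smul]
  have h2 : ((c • (T p.1).symm (x p.1)) : lp (fun _ : ℕ => ℝ) 1) p.2
      = c * ((T p.1).symm (x p.1) : ℕ → ℝ) p.2 := by rw [lp.coeFn_smul]; rfl
  rw [h2]; ring

lemma uu_add (x y : lp E 1) (p : ℕ × ℕ) : uu T (x + y) p = uu T x p + uu T y p := by
  simp only [uu]
  have h1 : (x + y : lp E 1) p.1 = x p.1 + y p.1 := by rw [lp.coeFn_add]; rfl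
  rw [h1, map_add]
  have h2 : ((T p.1).symm (x p.1) + (T p.1).symm (y p.1) : lp (fun _ : ℕ => ℝ) 1) p.2
      = ((T p.1).symm (x p.1) : ℕ → ℝ) p.2 + ((T p.1).symm (y p.1) : ℕ → ℝ) p.2 := by
    rw [lp.coeFn_add]; rfl
  rw [h2]; ring

lemma uu_zero (p : ℕ × ℕ) : uu T (0 : lp E 1) p = 0 := by
  simp only [uu]
  have h1 : (0 : lp E 1) p.1 = 0 := rfl
  rw [h1, map_zero]
  have h2 : ((0 : lp (fun _ : ℕ => ℝ) 1) : ℕ → ℝ) p.2 = 0 := rfl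
  rw [h2]; ring

lemma uu_sum {ι : Type*} (s : Finset ι) (a : ι → ℝ) (y : ι → lp E 1) (p : ℕ × ℕ) :
    uu T (∑ j ∈ s, a j • y j) p = ∑ j ∈ s, a j * uu T (y j) p := by
  classical
  induction s using Finset.induction with
  | empty => simp [uu_zero]
  | insert _ _ hj ih =>
    rw [Finset.sum_insert hj, Finset.sum_insert hj, uu_add, uu_smul, ih]


include hT in
theorem core (e : ℕ → lp E 1) (he : ∀ i, ‖e i‖ = 1)
    (K : ℝ) (hK : 1 ≤ K) (hsep : ∀ i j, i < j → 1 / K ≤ ‖e i - e j‖) :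
    ∃ c : ℝ, 0 < c ∧ ∃ Φ : ℕ → ℕ, StrictMono Φ ∧
      ∀ (n : ℕ) (a : ℕ → ℝ) (k : ℕ → ℕ), StrictMono k →
        c * ∑ j ∈ Finset.range n, |a j| ≤ ‖∑ j ∈ Finset.range n, a j • e (Φ (k j))‖ := by
  classical
  have hK0 : 0 < K := lt_of_lt_of_le one_pos hK
  set w : ℕ → (ℕ × ℕ → ℝ) := fun i => uu T (e i) with hw
  have hwsum : ∀ i, HasSum (fun p => |w i p|) 1 := fun i => he i ▸ uu_hasSum T hT (e i)
  have hwmem : ∀ i, w i ∈ Set.pi Set.univ (fun _ : ℕ × ℕ => Set.Icc (-1 : ℝ) 1) := by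
    intro i p _
    have h1 : |w i p| ≤ 1 := le_hasSum (hwsum i) p fun q _ => abs_nonneg _
    exact abs_le.mp h1
  obtain ⟨g, -, ψ, hψ, hgconv⟩ :=
    (isCompact_univ_pi fun _ : ℕ × ℕ => isCompact_Icc).tendsto_subseq hwmem
  have hpt : ∀ p, Filter.Tendsto (fun i => w (ψ i) p) Filter.atTop (nhds (g p)) :=
    fun p => tendsto_pi_nhds.mp hgconv p
  -- g is absolutely summable
  have hgF : ∀ F : Finset (ℕ × ℕ), ∑ p ∈ F, |g p| ≤ 1 := by
    intro F
    have hconv : Filter.Tendsto (fun i => ∑ p ∈ F, |w (ψ i) p|) Filter.atTop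
        (nhds (∑ p ∈ F, |g p|)) := tendsto_finset_sum F fun p _ => (hpt p).abs
    exact le_of_tendsto hconv (Filter.Eventually.of_forall fun i =>
      sum_le_hasSum F (fun q _ => abs_nonneg _) (hwsum (ψ i)))
  have hgsum : Summable fun p => |g p| := summable_of_sum_le (fun p => abs_nonneg _) hgF
  -- the perturbations h i
  set h : ℕ → (ℕ × ℕ → ℝ) := fun i p => w (ψ i) p - g p with hh
  have hhsum : ∀ i, Summable fun p => |h i p| := fun i =>
    Summable.of_nonneg_of_le (fun p => abs_nonneg _) (fun p => abs_sub (w (ψ i) p) (g p))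
      ((hwsum (ψ i)).summable.add hgsum)
  have hpt0 : ∀ p, Filter.Tendsto (fun i => h i p) Filter.atTop (nhds 0) := by
    intro p
    have := (hpt p).sub_const (g p)
    simpa [hh] using this
  -- separation of the masses
  set M : ℕ → ℝ := fun i => ∑' p, |h i p| with hM
  have hMsep : ∀ i j, i < j → 1 / K ≤ M i + M j := by
    intro i j hij
    have h1 : 1 / K ≤ ‖e (ψ i) - e (ψ j)‖ := hsep _ _ (hψ hij)
    have h2 : HasSum (fun p => |uu T (e (ψ i) - e (ψ j)) p|) ‖e (ψ i) - e (ψ j)‖ :=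
      uu_hasSum T hT _
    have h3 : ‖e (ψ i) - e (ψ j)‖ ≤ M i + M j := by
      rw [← h2.tsum_eq, hM, ← Summable.tsum_add (hhsum i) (hhsum j)]
      refine Summable.tsum_le_tsum (fun p => ?_) h2.summable ((hhsum i).add (hhsum j))
      rw [uu_sub]
      have he1 : uu T (e (ψ i)) p - uu T (e (ψ j)) p = h i p - h j p := by
        simp only [hh, hw]; ring
      rw [he1]
      exact abs_sub _ _
    linarith
  set d : ℝ := 1 / (2 * K) with hd
  have hd0 : 0 < d := by positivity
  have hfreq : ∀ N, ∃ i > N, d ≤ M i := by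
    intro N
    by_cases hc : d ≤ M (N + 1)
    · exact ⟨N + 1, Nat.lt_succ_self N, hc⟩
    · refine ⟨N + 2, by omega, ?_⟩
      have h1 : 1 / K ≤ M (N + 1) + M (N + 2) := hMsep (N + 1) (N + 2) (by omega)
      have h2 : 1 / K = d + d := by rw [hd]; field_simp; ring
      push_neg at hc
      linarith
  obtain ⟨ρ, hρ, hρ2⟩ := Nat.exists_strictMono_subsequence hfreq
  set H : ℕ → (ℕ × ℕ → ℝ) := fun t => h (ρ t) with hHdef
  have hHsum : ∀ t, Summable fun p => |H t p| := fun t => hhsum (ρ t)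
  have hHM : ∀ t, d ≤ ∑' p, |H t p| := fun t => hρ2 t
  set ε : ℝ := 1 / (20 * K) with hε
  have hε0 : 0 < ε := by positivity
  -- capture lemma
  have cap : ∀ f : ℕ × ℕ → ℝ, Summable (fun p => |f p|) → ∀ F₀ : Finset (ℕ × ℕ),
      ∃ F : Finset (ℕ × ℕ), F₀ ⊆ F ∧ (∑' p, |f p|) - ε < ∑ p ∈ F, |f p| := by
    intro f hf F₀
    have h1 : Filter.Tendsto (fun F : Finset (ℕ × ℕ) => ∑ p ∈ F, |f p|) Filter.atTop
        (nhds (∑' p, |f p|)) := hf.hasSum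
    have h2 := (h1.eventually (eventually_gt_nhds
      (by linarith : (∑' p, |f p|) - ε < ∑' p, |f p|))).and (Filter.eventually_ge_atTop F₀)
    obtain ⟨F, hF1, hF2⟩ := h2.exists
    exact ⟨F, hF2, hF1⟩
  -- smallness on a fixed finite set, far along H
  have smalH : ∀ (F : Finset (ℕ × ℕ)) (N : ℕ), ∃ t > N, ∑ p ∈ F, |H t p| < ε := by
    intro F N
    have h1 : Filter.Tendsto (fun t => ∑ p ∈ F, |H t p|) Filter.atTop (nhds 0) := by
      have h2 : Filter.Tendsto (fun i => ∑ p ∈ F, |h i p|) Filter.atTop (nhds 0) := by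
        have := tendsto_finset_sum F fun p (_ : p ∈ F) => (hpt0 p).abs
        simpa using this
      exact h2.comp hρ.tendsto_atTop
    obtain ⟨t, ht1, ht2⟩ := ((h1.eventually (eventually_lt_nhds hε0)).and
      (Filter.eventually_gt_atTop N)).exists
    exact ⟨t, ht2, ht1⟩
  -- recursive construction
  have step_ex : ∀ q : Finset (ℕ × ℕ) × ℕ, ∃ q' : Finset (ℕ × ℕ) × ℕ,
      q.1 ⊆ q'.1 ∧ (∑' p, |H q.2 p|) - ε < ∑ p ∈ q'.1, |H q.2 p| ∧ q.2 < q'.2 ∧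
        ∑ p ∈ q'.1, |H q'.2 p| < ε := by
    rintro ⟨F, t⟩
    obtain ⟨F', hF'1, hF'2⟩ := cap (H t) (hHsum t) F
    obtain ⟨t', ht'1, ht'2⟩ := smalH F' t
    exact ⟨(F', t'), hF'1, hF'2, ht'1, ht'2⟩
  choose step hstep1 hstep2 hstep3 hstep4 using step_ex
  obtain ⟨F₀, -, hF₀⟩ := cap g hgsum ∅
  obtain ⟨t₀, -, ht₀⟩ := smalH F₀ 0
  set Q : ℕ → Finset (ℕ × ℕ) × ℕ := fun m => step^[m] (F₀, t₀) with hQ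
  set Fs : ℕ → Finset (ℕ × ℕ) := fun m => (Q m).1 with hFs
  set σ : ℕ → ℕ := fun m => (Q m).2 with hσ
  have hQsucc : ∀ m, Q (m + 1) = step (Q m) := fun m => Function.iterate_succ_apply' step m _
  have inv1 : ∀ m, Fs m ⊆ Fs (m + 1) := by
    intro m
    have := hstep1 (Q m)
    rw [hFs]
    simp only [hQsucc m]
    exact this
  have inv2 : ∀ m, (∑' p, |H (σ m) p|) - ε < ∑ p ∈ Fs (m + 1), |H (σ m) p| := by
    intro m
    have := hstep2 (Q m)
    simp only [hFs, hσ, hQsucc m]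
    exact this
  have inv3 : ∀ m, σ m < σ (m + 1) := by
    intro m
    have := hstep3 (Q m)
    simp only [hσ, hQsucc m]
    exact this
  have inv4 : ∀ m, ∑ p ∈ Fs m, |H (σ m) p| < ε := by
    intro m
    cases m with
    | zero => simpa [hFs, hσ, hQ] using ht₀
    | succ m =>
      have := hstep4 (Q m)
      simp only [hFs, hσ, hQsucc m]
      exact this
  have hbase : (∑' p, |g p|) - ε < ∑ p ∈ Fs 0, |g p| := by simpa [hFs, hQ] using hF₀
  have Fmono : Monotone Fs := monotone_nat_of_le_succ inv1
  have σmono : StrictMono σ := strictMono_nat_of_lt_succ inv3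
  -- the extraction
  refine ⟨1 / (4 * K), by positivity, fun t => ψ (ρ (σ t)), hψ.comp (hρ.comp σmono), ?_⟩
  intro n a k hk
  set G : ℕ → Finset (ℕ × ℕ) := fun j => Fs (k j + 1) \ Fs (k j) with hG
  have hGdisj : ∀ j j', j < j' → Disjoint (G j) (G j') := by
    intro j j' hjj'
    have hsub : G j ⊆ Fs (k j') :=
      Finset.sdiff_subset.trans (Fmono (Nat.succ_le_of_lt (hk hjj')))
    exact (Finset.sdiff_disjoint.mono_right hsub).symm
  have hGpair : (↑(Finset.range n) : Set ℕ).PairwiseDisjoint G := by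
    intro j _ j' _ hne
    rcases lt_or_gt_of_ne hne with h1 | h1
    · exact hGdisj _ _ h1
    · exact (hGdisj _ _ h1).symm
  set y : lp E 1 := ∑ j ∈ Finset.range n, a j • e (ψ (ρ (σ (k j)))) with hy
  set x : ℕ × ℕ → ℝ := fun p =>
    (∑ j ∈ Finset.range n, a j) * g p + ∑ j ∈ Finset.range n, a j * H (σ (k j)) p with hx
  have hxy : ∀ p, uu T y p = x p := by
    intro p
    rw [hy, uu_sum, hx]
    have h1 : ∀ j, uu T (e (ψ (ρ (σ (k j))))) p = g p + H (σ (k j)) p := by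
      intro j
      simp only [hHdef, hh, hw]
      ring
    have h2 : ∀ j ∈ Finset.range n, a j * uu T (e (ψ (ρ (σ (k j))))) p
        = a j * g p + a j * H (σ (k j)) p := by
      intro j _; rw [h1 j]; ring
    rw [Finset.sum_congr rfl h2, Finset.sum_add_distrib, ← Finset.sum_mul]
  have hy_hasSum : HasSum (fun p => |x p|) ‖y‖ := by
    have h1 := uu_hasSum T hT y
    have h2 : (fun p => |uu T y p|) = fun p => |x p| := funext fun p => by rw [hxy p]
    rwa [h2] at h1
  set U : Finset (ℕ × ℕ) := (Finset.range n).biUnion G with hU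
  -- total mass bound
  have htot : ∑ j ∈ Finset.range n, ∑ p ∈ G j, |x p| ≤ ‖y‖ := by
    rw [← Finset.sum_biUnion hGpair]
    exact sum_le_hasSum U (fun p _ => abs_nonneg _) hy_hasSum
  -- per-j hump lower bound
  have hump : ∀ j, d - 2 * ε ≤ ∑ p ∈ G j, |H (σ (k j)) p| := by
    intro j
    rw [hG]
    rw [Finset.sum_sdiff_eq_sub (Fmono (Nat.le_succ (k j)))]
    have h1 := inv2 (k j)
    have h2 := inv4 (k j)
    have h3 := hHM (σ (k j))
    linarith
  -- g has small mass on U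
  have hgU : ∑ p ∈ U, |g p| < ε := by
    have hdisj : Disjoint U (Fs 0) := by
      rw [hU, Finset.disjoint_left]
      intro p hp hp0
      rw [Finset.mem_biUnion] at hp
      obtain ⟨j, -, hpj⟩ := hp
      rw [hG, Finset.mem_sdiff] at hpj
      exact hpj.2 (Fmono (Nat.zero_le (k j)) hp0)
    have h1 : ∑ p ∈ U, |g p| + ∑ p ∈ Fs 0, |g p| ≤ ∑' p, |g p| := by
      rw [← Finset.sum_union hdisj]
      exact Summable.sum_le_tsum _ (fun p _ => abs_nonneg _) hgsum
    linarith [hbase]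
  -- cross terms small
  have hcross : ∀ j' < n, ∑ j ∈ (Finset.range n).erase j', ∑ p ∈ G j, |H (σ (k j')) p| ≤ 2 * ε := by
    intro j' hj'
    have hsplit : (Finset.range n).erase j' = Finset.range j' ∪ Finset.Ico (j' + 1) n := by
      ext t
      simp only [Finset.mem_erase, Finset.mem_range, Finset.mem_union, Finset.mem_Ico]
      omega
    have hdisjJ : Disjoint (Finset.range j') (Finset.Ico (j' + 1) n) := by
      rw [Finset.disjoint_left]
      intro t ht1 ht2
      rw [Finset.mem_range] at ht1
      rw [Finset.mem_Ico] at ht2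
      omega
    rw [hsplit, Finset.sum_union hdisjJ]
    have hA : ∑ j ∈ Finset.range j', ∑ p ∈ G j, |H (σ (k j')) p| < ε := by
      have hpair : (↑(Finset.range j') : Set ℕ).PairwiseDisjoint G := by
        intro u _ v _ hne
        rcases lt_or_gt_of_ne hne with h1 | h1
        · exact hGdisj _ _ h1
        · exact (hGdisj _ _ h1).symm
      rw [← Finset.sum_biUnion hpair]
      have hsub : (Finset.range j').biUnion G ⊆ Fs (k j') := by
        refine Finset.biUnion_subset.2 fun j hj => ?_
        rw [Finset.mem_range] at hj
        exact Finset.sdiff_subset.trans (Fmono (Nat.succ_le_of_lt (hk hj)))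
      calc ∑ p ∈ (Finset.range j').biUnion G, |H (σ (k j')) p|
          ≤ ∑ p ∈ Fs (k j'), |H (σ (k j')) p| :=
            Finset.sum_le_sum_of_subset_of_nonneg hsub fun p _ _ => abs_nonneg _
        _ < ε := inv4 (k j')
    have hB : ∑ j ∈ Finset.Ico (j' + 1) n, ∑ p ∈ G j, |H (σ (k j')) p| < ε := by
      have hpair : (↑(Finset.Ico (j' + 1) n) : Set ℕ).PairwiseDisjoint G := by
        intro u _ v _ hne
        rcases lt_or_gt_of_ne hne with h1 | h1
        · exact hGdisj _ _ h1
        · exact (hGdisj _ _ h1).symm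
      rw [← Finset.sum_biUnion hpair]
      set V : Finset (ℕ × ℕ) := (Finset.Ico (j' + 1) n).biUnion G with hV
      have hdisjV : Disjoint V (Fs (k j' + 1)) := by
        rw [hV, Finset.disjoint_left]
        intro p hp hp0
        rw [Finset.mem_biUnion] at hp
        obtain ⟨j, hj, hpj⟩ := hp
        rw [Finset.mem_Ico] at hj
        rw [hG, Finset.mem_sdiff] at hpj
        exact hpj.2 (Fmono (Nat.succ_le_of_lt (hk hj.1)) hp0)
      have h1 : ∑ p ∈ V, |H (σ (k j')) p| + ∑ p ∈ Fs (k j' + 1), |H (σ (k j')) p|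
          ≤ ∑' p, |H (σ (k j')) p| := by
        rw [← Finset.sum_union hdisjV]
        exact Summable.sum_le_tsum _ (fun p _ => abs_nonneg _) (hHsum _)
      linarith [inv2 (k j')]
    linarith
  -- per-j pointwise estimate
  have step3 : ∀ j ∈ Finset.range n,
      |a j| * (∑ p ∈ G j, |H (σ (k j)) p|)
        - (|∑ j' ∈ Finset.range n, a j'| * ∑ p ∈ G j, |g p|
          + ∑ j' ∈ (Finset.range n).erase j, |a j'| * ∑ p ∈ G j, |H (σ (k j')) p|)
      ≤ ∑ p ∈ G j, |x p| := by
    intro j hj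
    have hpw : ∀ p, |a j| * |H (σ (k j)) p|
        - (|∑ j' ∈ Finset.range n, a j'| * |g p|
          + ∑ j' ∈ (Finset.range n).erase j, |a j'| * |H (σ (k j')) p|)
        ≤ |x p| := by
      intro p
      set R : ℝ := (∑ j' ∈ Finset.range n, a j') * g p
        + ∑ j' ∈ (Finset.range n).erase j, a j' * H (σ (k j')) p with hR
      have hsplit : x p = a j * H (σ (k j)) p + R := by
        have h0 : ∑ j' ∈ Finset.range n, a j' * H (σ (k j')) p
            = a j * H (σ (k j)) p + ∑ j' ∈ (Finset.range n).erase j, a j' * H (σ (k j')) p :=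
          (Finset.add_sum_erase _ (fun j' => a j' * H (σ (k j')) p) hj).symm
        simp only [hx]
        rw [h0, hR]
        ring
      have h1 : |a j * H (σ (k j)) p| - |R| ≤ |x p| := by
        have h1a : |a j * H (σ (k j)) p| ≤ |a j * H (σ (k j)) p + R| + |R| := by
          calc |a j * H (σ (k j)) p|
              = |(a j * H (σ (k j)) p + R) + (-R)| := by
                congr 1
                ring
            _ ≤ |a j * H (σ (k j)) p + R| + |(-R)| := abs_add_le _ _
            _ = |a j * H (σ (k j)) p + R| + |R| := by rw [abs_neg]
        rw [hsplit]
        linarith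
      have h2 : |R| ≤ |∑ j' ∈ Finset.range n, a j'| * |g p|
            + ∑ j' ∈ (Finset.range n).erase j, |a j'| * |H (σ (k j')) p| := by
        rw [hR]
        refine (abs_add_le _ _).trans ?_
        gcongr
        · rw [abs_mul]
        · refine (Finset.abs_sum_le_sum_abs _ _).trans ?_
          refine le_of_eq (Finset.sum_congr rfl fun j' _ => ?_)
          rw [abs_mul]
      rw [abs_mul] at h1
      linarith
    have hsum := Finset.sum_le_sum fun p (_ : p ∈ G j) => hpw p
    calc |a j| * (∑ p ∈ G j, |H (σ (k j)) p|)
          - (|∑ j' ∈ Finset.range n, a j'| * ∑ p ∈ G j, |g p|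
            + ∑ j' ∈ (Finset.range n).erase j, |a j'| * ∑ p ∈ G j, |H (σ (k j')) p|)
        = ∑ p ∈ G j, (|a j| * |H (σ (k j)) p|
          - (|∑ j' ∈ Finset.range n, a j'| * |g p|
            + ∑ j' ∈ (Finset.range n).erase j, |a j'| * |H (σ (k j')) p|)) := by
          rw [Finset.sum_sub_distrib, Finset.sum_add_distrib, ← Finset.mul_sum, ← Finset.mul_sum]
          congr 2
          rw [Finset.sum_comm]
          exact Finset.sum_congr rfl fun j' _ => by rw [Finset.mul_sum]
      _ ≤ ∑ p ∈ G j, |x p| := hsum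
  -- sum up
  have hsum3 : ∑ j ∈ Finset.range n, (|a j| * (∑ p ∈ G j, |H (σ (k j)) p|))
      - (|∑ j' ∈ Finset.range n, a j'| * ∑ p ∈ U, |g p|
        + ∑ j ∈ Finset.range n, ∑ j' ∈ (Finset.range n).erase j,
            |a j'| * ∑ p ∈ G j, |H (σ (k j')) p|)
      ≤ ‖y‖ := by
    have h1 := Finset.sum_le_sum step3
    rw [Finset.sum_sub_distrib, Finset.sum_add_distrib, ← Finset.mul_sum] at h1
    have h2 : ∑ j ∈ Finset.range n, ∑ p ∈ G j, |g p| = ∑ p ∈ U, |g p| := by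
      rw [hU, Finset.sum_biUnion hGpair]
    rw [h2] at h1
    linarith [htot]
  -- swap the double sum
  have hswap : ∑ j ∈ Finset.range n, ∑ j' ∈ (Finset.range n).erase j,
        |a j'| * ∑ p ∈ G j, |H (σ (k j')) p|
      = ∑ j' ∈ Finset.range n, ∑ j ∈ (Finset.range n).erase j',
        |a j'| * ∑ p ∈ G j, |H (σ (k j')) p| := by
    have e1 : ∀ j ∈ Finset.range n, ∑ j' ∈ (Finset.range n).erase j,
          |a j'| * ∑ p ∈ G j, |H (σ (k j')) p|
        = (∑ j' ∈ Finset.range n, |a j'| * ∑ p ∈ G j, |H (σ (k j')) p|)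
          - |a j| * ∑ p ∈ G j, |H (σ (k j)) p| := fun j hj => Finset.sum_erase_eq_sub hj
    have e2 : ∀ j' ∈ Finset.range n, ∑ j ∈ (Finset.range n).erase j',
          |a j'| * ∑ p ∈ G j, |H (σ (k j')) p|
        = (∑ j ∈ Finset.range n, |a j'| * ∑ p ∈ G j, |H (σ (k j')) p|)
          - |a j'| * ∑ p ∈ G j', |H (σ (k j')) p| := fun j' hj' => Finset.sum_erase_eq_sub hj'
    rw [Finset.sum_congr rfl e1, Finset.sum_congr rfl e2,
      Finset.sum_sub_distrib, Finset.sum_sub_distrib, Finset.sum_comm]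
  -- final arithmetic
  have habs : |∑ j ∈ Finset.range n, a j| ≤ ∑ j ∈ Finset.range n, |a j| :=
    Finset.abs_sum_le_sum_abs _ _
  have hS0 : 0 ≤ ∑ j ∈ Finset.range n, |a j| := Finset.sum_nonneg fun j _ => abs_nonneg _
  have hcross' : ∑ j' ∈ Finset.range n, ∑ j ∈ (Finset.range n).erase j',
        |a j'| * ∑ p ∈ G j, |H (σ (k j')) p|
      ≤ ∑ j' ∈ Finset.range n, |a j'| * (2 * ε) := by
    refine Finset.sum_le_sum fun j' hj' => ?_
    rw [← Finset.mul_sum]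
    refine mul_le_mul_of_nonneg_left ?_ (abs_nonneg _)
    exact hcross j' (Finset.mem_range.mp hj')
  have hhump' : ∑ j ∈ Finset.range n, |a j| * (d - 2 * ε)
      ≤ ∑ j ∈ Finset.range n, |a j| * (∑ p ∈ G j, |H (σ (k j)) p|) := by
    refine Finset.sum_le_sum fun j _ => ?_
    exact mul_le_mul_of_nonneg_left (hump j) (abs_nonneg _)
  have hgU' : |∑ j' ∈ Finset.range n, a j'| * ∑ p ∈ U, |g p|
      ≤ (∑ j ∈ Finset.range n, |a j|) * ε := by
    refine mul_le_mul habs (le_of_lt hgU) ?_ hS0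
    exact Finset.sum_nonneg fun p _ => abs_nonneg _
  have harith : 1 / (4 * K) = d - 2 * ε - 2 * ε - ε := by
    rw [hd, hε]; field_simp; ring
  rw [hswap] at hsum3
  have hsum_mul : ∑ j ∈ Finset.range n, |a j| * (d - 2 * ε)
      = (d - 2 * ε) * ∑ j ∈ Finset.range n, |a j| := by
    rw [← Finset.sum_mul, mul_comm]
  have hsum_mul2 : ∑ j' ∈ Finset.range n, |a j'| * (2 * ε)
      = 2 * ε * ∑ j ∈ Finset.range n, |a j| := by
    rw [← Finset.sum_mul]; ring
  calc (1 / (4 * K)) * ∑ j ∈ Finset.range n, |a j|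
      = (d - 2 * ε) * (∑ j ∈ Finset.range n, |a j|)
        - (∑ j ∈ Finset.range n, |a j|) * ε - 2 * ε * ∑ j ∈ Finset.range n, |a j| := by
        rw [harith]; ring
    _ ≤ ‖y‖ := by
        rw [← hsum_mul] at *
        nlinarith [hsum3, hhump', hcross', hgU', hsum_mul2]

lemma sep_of_basic {Y : Type*} [NormedAddCommGroup Y] [NormedSpace ℝ Y] (e : ℕ → Y)
    (he : ∀ i, ‖e i‖ = 1) {K : ℝ} (hK1 : 1 ≤ K)
    (hKb : ∀ (a : ℕ → ℝ) (n m : ℕ), n ≤ m →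
      ‖∑ i ∈ Finset.range n, a i • e i‖ ≤ K * ‖∑ i ∈ Finset.range m, a i • e i‖) :
    ∀ i j, i < j → 1 / K ≤ ‖e i - e j‖ := by
  intro i j hij
  have hK0 : 0 < K := lt_of_lt_of_le one_pos hK1
  set a : ℕ → ℝ := fun t => if t = i then 1 else if t = j then -1 else 0 with ha
  have hsplit : ∀ t, a t • e t = (if t = i then e t else 0) + (if t = j then -e t else 0) := by
    intro t
    by_cases h1 : t = i
    · subst h1; simp [ha, hij.ne]
    · by_cases h2 : t = j
      · subst h2; simp [ha, h1]
      · simp [ha, h1, h2]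
  have h1 : ∑ t ∈ Finset.range (i + 1), a t • e t = e i := by
    rw [Finset.sum_congr rfl fun t _ => hsplit t, Finset.sum_add_distrib,
      Finset.sum_ite_eq' _ i, Finset.sum_ite_eq' _ j]
    have hi : i ∈ Finset.range (i + 1) := by simp
    have hj : j ∉ Finset.range (i + 1) := by simp only [Finset.mem_range]; omega
    rw [if_pos hi, if_neg hj, add_zero]
  have h2 : ∑ t ∈ Finset.range (j + 1), a t • e t = e i - e j := by
    rw [Finset.sum_congr rfl fun t _ => hsplit t, Finset.sum_add_distrib,
      Finset.sum_ite_eq' _ i, Finset.sum_ite_eq' _ j]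
    have hi : i ∈ Finset.range (j + 1) := by simp only [Finset.mem_range]; omega
    have hj : j ∈ Finset.range (j + 1) := by simp
    rw [if_pos hi, if_pos hj, sub_eq_add_neg]
  have h3 := hKb a (i + 1) (j + 1) (by omega)
  rw [h1, h2, he i] at h3
  rw [div_le_iff₀ hK0]
  linarith

include hT in
theorem part1 (e : ℕ → lp E 1) (he : ∀ i, ‖e i‖ = 1) (hb : IsBasicSeq e)
    (V : Type) [NormedAddCommGroup V] [NormedSpace ℝ V] (v : ℕ → V)
    (hv : ∀ i, ‖v i‖ = 1) (hsm : GeneratesSpreadingModel e V v) : EquivL1Basis v := by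
  classical
  obtain ⟨K, hK1, hKb⟩ := hb
  obtain ⟨δ, hδpos, hδanti, hδ0, hδ⟩ := hsm
  obtain ⟨c, hc0, Φ, hΦ, hlow⟩ := core T hT e he K hK1 (sep_of_basic e he hK1 hKb)
  set C : ℝ := max (1 / c) (1 + δ 0) with hC
  have hδ00 : 0 < δ 0 := hδpos 0
  have hC0 : 0 < C := lt_of_lt_of_le (by linarith) (le_max_right _ _)
  have hCc : 1 / C ≤ c := by
    rw [div_le_iff₀ hC0]
    calc (1 : ℝ) = c * (1 / c) := by field_simp
      _ ≤ c * C := by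
        exact mul_le_mul_of_nonneg_left (le_max_left _ _) (le_of_lt hc0)
  refine ⟨C, hC0, ?_⟩
  intro n a
  by_cases hz : ∑ j ∈ Finset.range n, |a j| = 0
  · have hzero : ∀ j ∈ Finset.range n, a j = 0 := fun j hj => abs_eq_zero.mp
      ((Finset.sum_eq_zero_iff_of_nonneg fun j _ => abs_nonneg (a j)).mp hz j hj)
    have h1 : ∑ i ∈ Finset.range n, a i • v i = 0 :=
      Finset.sum_eq_zero fun j hj => by rw [hzero j hj, zero_smul]
    rw [h1, hz]
    simp
  · have hSnn : 0 ≤ ∑ j ∈ Finset.range n, |a j| :=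
      Finset.sum_nonneg fun j _ => abs_nonneg _
    have hS0 : 0 < ∑ j ∈ Finset.range n, |a j| := lt_of_le_of_ne hSnn (Ne.symm hz)
    set S := ∑ j ∈ Finset.range n, |a j| with hSd
    set b : ℕ → ℝ := fun j => if j < n then a j / S else 0 with hbd
    have hbabs : ∀ j, |b j| ≤ 1 := by
      intro j
      simp only [hbd]
      by_cases hj : j < n
      · simp only [if_pos hj, abs_div, abs_of_pos hS0]
        rw [div_le_one hS0]
        exact Finset.single_le_sum (f := fun t => |a t|) (fun t _ => abs_nonneg _)
          (Finset.mem_range.mpr hj)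
      · simp [if_neg hj]
    have hbsum : ∑ j ∈ Finset.range n, |b j| = 1 := by
      simp only [hbd]
      have : ∀ j ∈ Finset.range n, |if j < n then a j / S else 0| = |a j| / S := by
        intro j hj
        rw [if_pos (Finset.mem_range.mp hj), abs_div, abs_of_pos hS0]
      rw [Finset.sum_congr rfl this, ← Finset.sum_div, ← hSd, div_self (ne_of_gt hS0)]
    have hbv : ∑ j ∈ Finset.range n, b j • v j = (1 / S) • ∑ j ∈ Finset.range n, a j • v j := by
      rw [Finset.smul_sum]
      refine Finset.sum_congr rfl fun j hj => ?_
      simp only [hbd]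
      rw [if_pos (Finset.mem_range.mp hj), smul_smul]
      congr 1
      field_simp
    have hnorm_eq : ‖∑ j ∈ Finset.range n, b j • v j‖
        = (1 / S) * ‖∑ j ∈ Finset.range n, a j • v j‖ := by
      rw [hbv, norm_smul, Real.norm_eq_abs, abs_of_pos (by positivity)]
    -- upper bound
    have hup : ‖∑ j ∈ Finset.range n, b j • v j‖ ≤ 1 + δ n := by
      have happ := hδ n (fun j => n + j) b (fun j _ => Nat.le_add_right n j)
        (fun j j' hjj' _ => by simpa using Nat.add_lt_add_left hjj' n) (fun j _ => hbabs j)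
      have hnorme : ‖∑ j ∈ Finset.range n, b j • e (n + j)‖ ≤ 1 := by
        refine (norm_sum_le _ _).trans (le_of_eq ?_)
        rw [← hbsum]
        refine Finset.sum_congr rfl fun j _ => ?_
        rw [norm_smul, Real.norm_eq_abs, he, mul_one]
      have := abs_lt.mp happ
      linarith [this.2]
    -- lower bound
    have hlowv : c ≤ ‖∑ j ∈ Finset.range n, b j • v j‖ := by
      have hkey : ∀ m, n ≤ m → c - δ m ≤ ‖∑ j ∈ Finset.range n, b j • v j‖ := by
        intro m hm
        have happ := hδ m (fun j => Φ (m + j)) b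
          (fun j _ => le_trans (Nat.le_add_right m j) hΦ.le_apply)
          (fun j j' hjj' _ => hΦ (Nat.add_lt_add_left hjj' m)) (fun j _ => hbabs j)
        have hcore := hlow m b (fun t => m + t) (fun s t hst => by simpa using Nat.add_lt_add_left hst m : StrictMono fun t => m + t)
        have hbm : ∑ j ∈ Finset.range m, |b j| = 1 := by
          rw [← hbsum]
          refine (Finset.sum_subset (Finset.range_subset_range.mpr hm) fun j _ hj => ?_).symm
          simp only [hbd]
          rw [if_neg (by simpa using hj), abs_zero]
        have hvm : ∑ j ∈ Finset.range m, b j • v j = ∑ j ∈ Finset.range n, b j • v j := by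
          refine (Finset.sum_subset (Finset.range_subset_range.mpr hm) fun j _ hj => ?_).symm
          simp only [hbd]
          rw [if_neg (by simpa using hj), zero_smul]
        rw [hbm, mul_one] at hcore
        rw [hvm] at happ
        have := abs_lt.mp happ
        linarith [this.1]
      have htend : Filter.Tendsto (fun m => c - δ m) Filter.atTop (nhds c) := by
        have := (tendsto_const_nhds (x := c) (f := Filter.atTop (α := ℕ))).sub hδ0
        simpa using this
      refine le_of_tendsto htend ?_
      filter_upwards [Filter.eventually_ge_atTop n] with m hm using hkey m hm
    have e1 : ‖∑ i ∈ Finset.range n, a i • v i‖ = S * ‖∑ j ∈ Finset.range n, b j • v j‖ := by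
      rw [hnorm_eq]
      field_simp
    have h1 : S * c ≤ S * ‖∑ j ∈ Finset.range n, b j • v j‖ :=
      mul_le_mul_of_nonneg_left hlowv hSnn
    have h2 : S * (1 / C) ≤ S * c := mul_le_mul_of_nonneg_left hCc hSnn
    have h4 : S * ‖∑ j ∈ Finset.range n, b j • v j‖ ≤ S * (1 + δ n) :=
      mul_le_mul_of_nonneg_left hup hSnn
    have h5 : δ n ≤ δ 0 := hδanti (Nat.zero_le n)
    have h6 : 1 + δ 0 ≤ C := le_max_right _ _
    constructor
    · rw [e1]
      nlinarith
    · rw [e1]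
      nlinarith


include hT in
theorem part2 : ¬ ∃ C : ℝ, 0 < C ∧
    ∀ e : ℕ → lp E 1, (∀ i, ‖e i‖ = 1) → IsBasicSeq e →
    ∀ (V : Type) [NormedAddCommGroup V] [NormedSpace ℝ V] (v : ℕ → V),
      (∀ i, ‖v i‖ = 1) → GeneratesSpreadingModel e V v →
      ∀ (n : ℕ) (a : ℕ → ℝ),
        (1 / C) * ∑ i ∈ Finset.range n, |a i| ≤ ‖∑ i ∈ Finset.range n, a i • v i‖ ∧
        ‖∑ i ∈ Finset.range n, a i • v i‖ ≤ C * ∑ i ∈ Finset.range n, |a i| := by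
  classical
  rintro ⟨C, hC0, hAll⟩
  set lam : ℝ := 1 / (2 * max C 1) with hlam
  have hmax1 : (1:ℝ) ≤ max C 1 := le_max_right _ _
  have hmax0 : (0:ℝ) < max C 1 := lt_of_lt_of_le one_pos hmax1
  have hlam0 : 0 < lam := by positivity
  have hlam2 : lam ≤ 1 / 2 := by
    rw [hlam, div_le_div_iff₀ (by positivity) (by norm_num)]
    linarith
  have hlam1 : lam < 1 := by linarith
  -- the vectors
  set d0 : lp (fun _ : ℕ => ℝ) 1 := lp.single 1 0 (1 : ℝ) with hd0
  set dk : ℕ → lp (fun _ : ℕ => ℝ) 1 := fun t => lp.single 1 (t + 1) (1 : ℝ) with hdk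
  set y : ℕ → lp (fun _ : ℕ => ℝ) 1 := fun t => (1 - lam) • d0 + lam • dk t with hy
  set e : ℕ → lp E 1 := fun t => lp.single 1 0 (T 0 (y t)) with he
  -- coordinates of y
  have hy0 : ∀ t, (y t : ℕ → ℝ) 0 = 1 - lam := by
    intro t
    simp only [hy, hd0, hdk]
    rw [lp.coeFn_add, Pi.add_apply, lp.coeFn_smul, lp.coeFn_smul, Pi.smul_apply, Pi.smul_apply]
    rw [lp.single_apply_self, lp.single_apply_ne 1 (t+1) _ (by omega : (0:ℕ) ≠ t + 1)]
    simp
  have hyk : ∀ t k, k ≠ 0 → (y t : ℕ → ℝ) k = if k = t + 1 then lam else 0 := by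
    intro t k hk
    simp only [hy, hd0, hdk]
    rw [lp.coeFn_add, Pi.add_apply, lp.coeFn_smul, lp.coeFn_smul, Pi.smul_apply, Pi.smul_apply]
    rw [lp.single_apply_ne 1 0 _ hk]
    by_cases hk1 : k = t + 1
    · subst hk1; rw [lp.single_apply_self]; simp
    · rw [lp.single_apply_ne 1 (t+1) _ hk1]; simp [hk1]
  -- coordinates of uu of e
  have huu1 : ∀ (t : ℕ) (p : ℕ × ℕ),
      uu T (e t) p = if p.1 = 0 then (y t : ℕ → ℝ) p.2 else 0 := by
    rintro t ⟨p1, p2⟩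
    by_cases hp : p1 = 0
    · subst hp
      have hstep : uu T (e t) ((0 : ℕ), p2) = (y t : ℕ → ℝ) p2 := by
        simp only [uu, he]
        have h1 : (lp.single 1 0 (T 0 (y t)) : ∀ n, E n) 0 = T 0 (y t) :=
          lp.single_apply_self 1 0 (T 0 (y t))
        rw [h1, (T 0).symm_apply_apply]
        norm_num
      rw [hstep]
      simp
    · have hstep : uu T (e t) (p1, p2) = 0 := by
        simp only [uu, he]
        have h1 : (lp.single 1 0 (T 0 (y t)) : ∀ n, E n) p1 = 0 :=
          lp.single_apply_ne 1 0 _ hp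
        rw [h1, map_zero]
        have h2 : ((0 : lp (fun _ : ℕ => ℝ) 1) : ℕ → ℝ) p2 = 0 := rfl
        rw [h2, mul_zero]
      rw [hstep]
      rw [if_neg hp]
  -- the key norm formula
  have key : ∀ (n : ℕ) (a : ℕ → ℝ) (i : ℕ → ℕ),
      (∀ j j', j < j' → j' < n → i j < i j') →
      ‖∑ j ∈ Finset.range n, a j • e (i j)‖
        = (1 - lam) * |∑ j ∈ Finset.range n, a j| + lam * ∑ j ∈ Finset.range n, |a j| := by
    intro n a i hinc
    have hinj : ∀ j ∈ Finset.range n, ∀ j' ∈ Finset.range n, i j = i j' → j = j' := by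
      intro j hj j' hj' hij
      rcases lt_trichotomy j j' with hcmp | hcmp | hcmp
      · exact absurd hij (Nat.ne_of_lt (hinc _ _ hcmp (Finset.mem_range.mp hj')))
      · exact hcmp
      · exact absurd hij.symm (Nat.ne_of_lt (hinc _ _ hcmp (Finset.mem_range.mp hj)))
    set z : ℕ → ℝ := fun k => ∑ j ∈ Finset.range n, a j * (y (i j) : ℕ → ℝ) k with hz
    have huu : ∀ p : ℕ × ℕ,
        uu T (∑ j ∈ Finset.range n, a j • e (i j)) p = if p.1 = 0 then z p.2 else 0 := by
      intro p
      rw [uu_sum]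
      by_cases hp : p.1 = 0
      · rw [if_pos hp, hz]
        refine Finset.sum_congr rfl fun j _ => ?_
        rw [huu1, if_pos hp]
      · rw [if_neg hp]
        refine Finset.sum_eq_zero fun j _ => ?_
        rw [huu1, if_neg hp, mul_zero]
    -- values of z
    have hz0 : z 0 = (∑ j ∈ Finset.range n, a j) * (1 - lam) := by
      simp only [hz]
      have hc : ∀ j ∈ Finset.range n, a j * (y (i j) : ℕ → ℝ) 0 = a j * (1 - lam) :=
        fun j _ => by rw [hy0]
      rw [Finset.sum_congr rfl hc, ← Finset.sum_mul]
    have hzj : ∀ t ∈ Finset.range n, z (i t + 1) = a t * lam := by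
      intro t ht
      simp only [hz]
      rw [Finset.sum_eq_single t]
      · rw [hyk _ _ (by omega), if_pos rfl]
      · intro j hj hjt
        rw [hyk _ _ (by omega)]
        have : ¬ (i t + 1 = i j + 1) := by
          intro hcon
          exact hjt (hinj j hj t ht (by omega))
        rw [if_neg this, mul_zero]
      · intro hcon
        exact absurd ht hcon
    have hzoff : ∀ k, k ≠ 0 → k ∉ (Finset.range n).image (fun j => i j + 1) → z k = 0 := by
      intro k hk0 hkim
      simp only [hz]
      refine Finset.sum_eq_zero fun j hj => ?_
      rw [hyk _ _ hk0]
      have : ¬ (k = i j + 1) := by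
        intro hcon
        exact hkim (Finset.mem_image.mpr ⟨j, hj, hcon.symm⟩)
      rw [if_neg this, mul_zero]
    -- the support finset
    set sk : Finset ℕ := insert 0 ((Finset.range n).image (fun j => i j + 1)) with hsk
    set s : Finset (ℕ × ℕ) := sk.image (fun k => ((0 : ℕ), k)) with hs
    have hF0 : ∀ p : ℕ × ℕ, p ∉ s → |if p.1 = 0 then z p.2 else 0| = 0 := by
      rintro ⟨p1, p2⟩ hps
      by_cases hp1 : p1 = 0
      · subst hp1
        rw [if_pos rfl, abs_eq_zero]
        have hp2 : p2 ∉ sk := by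
          intro hcon
          exact hps (Finset.mem_image.mpr ⟨p2, hcon, rfl⟩)
        rw [hsk] at hp2
        simp only [Finset.mem_insert, not_or] at hp2
        exact hzoff p2 hp2.1 hp2.2
      · rw [if_neg hp1, abs_zero]
    have hFsum : HasSum (fun p : ℕ × ℕ => |if p.1 = 0 then z p.2 else 0|)
        (∑ p ∈ s, |if p.1 = 0 then z p.2 else 0|) := hasSum_sum_of_ne_finset_zero hF0
    -- compute the finite sum
    have hssum : ∑ p ∈ s, |if p.1 = 0 then z p.2 else 0|
        = (1 - lam) * |∑ j ∈ Finset.range n, a j| + lam * ∑ j ∈ Finset.range n, |a j| := by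
      rw [hs, Finset.sum_image (by intro u _ v _ huv; exact (Prod.mk.injEq _ _ _ _).mp huv |>.2)]
      have : ∀ k ∈ sk, |if (0:ℕ) = 0 then z k else 0| = |z k| := by
        intro k _
        rw [if_pos rfl]
      rw [Finset.sum_congr rfl this, hsk]
      have h0im : (0:ℕ) ∉ (Finset.range n).image (fun j => i j + 1) := by
        simp only [Finset.mem_image, not_exists]
        rintro j ⟨hj, hcon⟩
        omega
      rw [Finset.sum_insert h0im,
        Finset.sum_image (fun u hu v hv huv => hinj u hu v hv (by omega))]
      have h1 : ∀ t ∈ Finset.range n, |z (i t + 1)| = lam * |a t| := by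
        intro t ht
        rw [hzj t ht, abs_mul, abs_of_nonneg (le_of_lt hlam0), mul_comm]
      rw [Finset.sum_congr rfl h1, hz0, abs_mul,
        abs_of_nonneg (by linarith : (0:ℝ) ≤ 1 - lam), ← Finset.mul_sum]
      ring
    have huniq := uu_hasSum T hT (∑ j ∈ Finset.range n, a j • e (i j))
    have heq : (fun p : ℕ × ℕ => |uu T (∑ j ∈ Finset.range n, a j • e (i j)) p|)
        = fun p : ℕ × ℕ => |if p.1 = 0 then z p.2 else 0| := funext fun p => by rw [huu p]
    rw [heq] at huniq
    rw [huniq.unique hFsum, hssum]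
  -- the e t are normalized
  have he1 : ∀ t, ‖e t‖ = 1 := by
    intro t
    have h1 := key 1 (fun _ => (1 : ℝ)) (fun _ => t)
      (fun j j' hjj' hlt => absurd hlt (by omega))
    rw [Finset.sum_range_one, Finset.sum_range_one, Finset.sum_range_one, one_smul] at h1
    rw [h1]
    norm_num
  -- e is a basic sequence
  have hbasic : IsBasicSeq e := by
    refine ⟨1 / lam, ?_, ?_⟩
    · rw [le_div_iff₀ hlam0]
      linarith
    intro a n m hnm
    have hm := key m a (fun j => j) (fun j j' hjj' _ => hjj')
    have h1 : ‖∑ i ∈ Finset.range n, a i • e i‖ ≤ ∑ i ∈ Finset.range n, |a i| := by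
      refine (norm_sum_le _ _).trans (le_of_eq ?_)
      refine Finset.sum_congr rfl fun j _ => ?_
      rw [norm_smul, Real.norm_eq_abs, he1, mul_one]
    have h2 : ∑ i ∈ Finset.range n, |a i| ≤ ∑ i ∈ Finset.range m, |a i| :=
      Finset.sum_le_sum_of_subset_of_nonneg (Finset.range_subset_range.mpr hnm)
        fun j _ _ => abs_nonneg _
    have h4 : 0 ≤ (1 - lam) * |∑ i ∈ Finset.range m, a i| :=
      mul_nonneg (by linarith) (abs_nonneg _)
    have h5 : (1 / lam) * ((1 - lam) * |∑ i ∈ Finset.range m, a i|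
          + lam * ∑ i ∈ Finset.range m, |a i|)
        = (1 / lam) * ((1 - lam) * |∑ i ∈ Finset.range m, a i|)
          + ∑ i ∈ Finset.range m, |a i| := by
      field_simp
    have h6 : 0 ≤ (1 / lam) * ((1 - lam) * |∑ i ∈ Finset.range m, a i|) :=
      mul_nonneg (by positivity) h4
    rw [hm, h5]
    linarith
  -- e generates itself as spreading model
  have hsm : GeneratesSpreadingModel e (lp E 1) e := by
    refine ⟨fun n => 1 / ((n : ℝ) + 1), fun n => by positivity, ?_, ?_, ?_⟩
    · intro m n hmn
      apply one_div_le_one_div_of_le (by positivity)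
      have : (m : ℝ) ≤ n := Nat.cast_le.mpr hmn
      linarith
    · exact tendsto_one_div_add_atTop_nhds_zero_nat
    · intro n i a hge hinc habs
      have h1 := key n a i hinc
      have h2 := key n a (fun j => j) (fun j j' hjj' _ => hjj')
      rw [h1, h2, sub_self, abs_zero]
      positivity
  -- derive the contradiction
  set aa : ℕ → ℝ := fun j => if j = 0 then 1 else if j = 1 then -1 else 0 with haa
  have h1 := (hAll e he1 hbasic (lp E 1) e he1 hsm 2 aa).1
  have hsum2 : ∑ i ∈ Finset.range 2, |aa i| = 2 := by
    rw [Finset.sum_range_succ, Finset.sum_range_one]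
    norm_num [haa]
  have hnorm2 : ‖∑ i ∈ Finset.range 2, aa i • e i‖ = 2 * lam := by
    have hk := key 2 aa (fun j => j) (fun j j' hjj' _ => hjj')
    have hs1 : ∑ j ∈ Finset.range 2, aa j = 0 := by
      rw [Finset.sum_range_succ, Finset.sum_range_one]
      simp [haa]
    rw [hk, hs1, hsum2, abs_zero, mul_zero, zero_add]
    ring
  rw [hsum2, hnorm2] at h1
  have h2 : 2 * lam = 1 / max C 1 := by
    rw [hlam]
    field_simp
  have h3 : 1 / max C 1 ≤ 1 / C := one_div_le_one_div_of_le hC0 (le_max_left _ _)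
  have h4 : 0 < 1 / C := by positivity
  linarith


end Aux

theorem l1_sum_of_scaled_l1_spreading_models
    (X : Type*) [NormedAddCommGroup X] [NormedSpace ℝ X] [CompleteSpace X]
    (hX : LebesgueProperty X)
    (E : ℕ → Type) [∀ n, NormedAddCommGroup (E n)] [∀ n, NormedSpace ℝ (E n)]
    [∀ n, CompleteSpace (E n)]
    (T : ∀ n : ℕ, lp (fun _ : ℕ => ℝ) 1 ≃ₗ[ℝ] E n)
    (hT : ∀ (n : ℕ) (x : lp (fun _ : ℕ => ℝ) 1), ‖T n x‖ = ((n : ℝ) + 1) * ‖x‖) :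
    (∀ e : ℕ → lp E 1, (∀ i, ‖e i‖ = 1) → IsBasicSeq e →
      ∀ (V : Type) [NormedAddCommGroup V] [NormedSpace ℝ V] (v : ℕ → V),
        (∀ i, ‖v i‖ = 1) → GeneratesSpreadingModel e V v → EquivL1Basis v)
    ∧ ¬ ∃ C : ℝ, 0 < C ∧ ∀ e : ℕ → lp E 1, (∀ i, ‖e i‖ = 1) → IsBasicSeq e →
        ∀ (V : Type) [NormedAddCommGroup V] [NormedSpace ℝ V] (v : ℕ → V),
          (∀ i, ‖v i‖ = 1) → GeneratesSpreadingModel e V v →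
          ∀ (n : ℕ) (a : ℕ → ℝ),
            (1 / C) * ∑ i ∈ Finset.range n, |a i| ≤ ‖∑ i ∈ Finset.range n, a i • v i‖ ∧
            ‖∑ i ∈ Finset.range n, a i • v i‖ ≤ C * ∑ i ∈ Finset.range n, |a i| := by
  constructor
  · intro e he hb V _ _ v hv hsm
    exact part1 T hT e he hb V v hv hsm
  · exact part2 T hT
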